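/- arXiv:1709.07593 — 3 statements merged into one kernel-verified Lean document; each statement's English description precedes it below -/
import Mathlib

section
/- For a natural number r with α > r, the r-th moment ∫₀^∞ t^r · f(t) dt of the LF distribution equals (1-p)·λ^r·Γ(1 - r/α), where f is the LF density. -/
open MeasureTheory Real

theorem lf_moments
    (lam alpha p : ℝ) (r : ℕ) (hlam : 0 < lam) (halpha : 0 < alpha)
    (hp : p ∈ Set.Ioo (0 : ℝ) 1) (hr : (r : ℝ) < alpha) :
    ∫ t in Set.Ioi (0 : ℝ),
      t ^ r * ((alpha * (1 - p) / lam) * (t / lam) ^ (-(alpha + 1)) *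
        Real.exp (-(t / lam) ^ (-alpha)))
      = (1 - p) * lam ^ r * Real.Gamma (1 - r / alpha) := by
  have hs : 0 < 1 - (r : ℝ) / alpha := by
    rw [sub_pos, div_lt_one halpha]; exact hr
  set C := alpha * (1 - p) / lam with hC
  set g : ℝ → ℝ := fun x => (lam * x) ^ r * (C * x ^ (-(alpha + 1)) * Real.exp (-x ^ (-alpha)))
    with hg
  set h : ℝ → ℝ := fun u => (1 / alpha) * (Real.exp (-u) * u ^ ((1 - (r : ℝ) / alpha) - 1))
    with hh
  have hJ : (∫ x in Set.Ioi (0 : ℝ), x ^ ((r : ℝ) - (alpha + 1)) * Real.exp (-x ^ (-alpha)))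
      = (1 / alpha) * Real.Gamma (1 - (r : ℝ) / alpha) := by
    have key := integral_comp_rpow_Ioi h (p := -alpha) (neg_ne_zero.mpr halpha.ne')
    have heq : ∀ x ∈ Set.Ioi (0 : ℝ),
        (|(-alpha)| * x ^ (-alpha - 1)) • h (x ^ (-alpha))
        = x ^ ((r : ℝ) - (alpha + 1)) * Real.exp (-x ^ (-alpha)) := by
      intro x hx
      have hx0 : 0 < x := hx
      have habs : |(-alpha)| = alpha := by rw [abs_neg, abs_of_pos halpha]
      have hpow : (x ^ (-alpha)) ^ ((1 - (r : ℝ) / alpha) - 1) = x ^ (r : ℝ) := by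
        rw [← Real.rpow_mul hx0.le]
        congr 1
        field_simp
        ring
      rw [hh, habs]
      simp only [smul_eq_mul]
      rw [hpow]
      rw [show (r : ℝ) - (alpha + 1) = (-alpha - 1) + (r : ℝ) by ring,
        Real.rpow_add hx0]
      field_simp
    rw [← setIntegral_congr_fun measurableSet_Ioi heq, key, hh]
    rw [integral_const_mul, ← Real.Gamma_eq_integral hs]
  calc ∫ t in Set.Ioi (0 : ℝ),
      t ^ r * (C * (t / lam) ^ (-(alpha + 1)) * Real.exp (-(t / lam) ^ (-alpha)))
      = ∫ t in Set.Ioi (0 : ℝ), g (lam⁻¹ * t) := by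
        refine setIntegral_congr_fun measurableSet_Ioi fun t ht => ?_
        rw [hg]
        simp only []
        rw [mul_inv_cancel_left₀ hlam.ne', div_eq_inv_mul]
    _ = (lam⁻¹)⁻¹ • ∫ x in Set.Ioi (lam⁻¹ * 0), g x :=
        integral_comp_mul_left_Ioi g 0 (inv_pos.mpr hlam)
    _ = lam * ∫ x in Set.Ioi (0 : ℝ), g x := by rw [mul_zero, inv_inv, smul_eq_mul]
    _ = lam * ∫ x in Set.Ioi (0 : ℝ),
          (lam ^ r * C) * (x ^ ((r : ℝ) - (alpha + 1)) * Real.exp (-x ^ (-alpha))) := by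
        congr 1
        refine setIntegral_congr_fun measurableSet_Ioi fun x hx => ?_
        have hx0 : 0 < x := hx
        rw [hg]
        simp only []
        rw [mul_pow, ← Real.rpow_natCast x r,
          show (r : ℝ) - (alpha + 1) = (r : ℝ) + (-(alpha + 1)) by ring,
          Real.rpow_add hx0]
        ring
    _ = lam * ((lam ^ r * C) * ((1 / alpha) * Real.Gamma (1 - (r : ℝ) / alpha))) := by
        rw [integral_const_mul, hJ]
    _ = (1 - p) * lam ^ r * Real.Gamma (1 - r / alpha) := by
        rw [hC]
        field_simp
end

section
/- The hazard function h(t) = f(t)/S(t) of the LF distribution tends to 0 as t → ∞. -/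
open Filter Real

theorem lf_hazard_tendsto_zero_atTop
    (lam alpha p : ℝ) (hlam : 0 < lam) (halpha : 0 < alpha)
    (hp : p ∈ Set.Ioo (0 : ℝ) 1) :
    Tendsto (fun t : ℝ =>
      ((alpha * (1 - p) / lam) * (t / lam) ^ (-(alpha + 1)) *
        Real.exp (-(t / lam) ^ (-alpha))) /
      (p + (1 - p) * (1 - Real.exp (-(t / lam) ^ (-alpha)))))
      atTop (nhds 0) := by
  have h1 : Tendsto (fun t : ℝ => t / lam) atTop atTop :=
    tendsto_id.atTop_div_const hlam
  have h2 : Tendsto (fun t : ℝ => (t / lam) ^ (-alpha)) atTop (nhds 0) :=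
    (tendsto_rpow_neg_atTop halpha).comp h1
  have h3 : Tendsto (fun t : ℝ => (t / lam) ^ (-(alpha + 1))) atTop (nhds 0) :=
    (tendsto_rpow_neg_atTop (by linarith)).comp h1
  have h4 : Tendsto (fun t : ℝ => Real.exp (-(t / lam) ^ (-alpha))) atTop (nhds 1) := by
    have := (Real.continuous_exp.tendsto (-0)).comp h2.neg
    simpa [Function.comp_def] using this
  have hnum : Tendsto (fun t : ℝ =>
      (alpha * (1 - p) / lam) * (t / lam) ^ (-(alpha + 1)) *
        Real.exp (-(t / lam) ^ (-alpha))) atTop (nhds 0) := by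
    have := ((tendsto_const_nhds.mul h3).mul h4 :
      Tendsto _ atTop (nhds ((alpha * (1 - p) / lam) * 0 * 1)))
    simpa using this
  have hden : Tendsto (fun t : ℝ =>
      p + (1 - p) * (1 - Real.exp (-(t / lam) ^ (-alpha)))) atTop (nhds p) := by
    have := (tendsto_const_nhds : Tendsto (fun _ : ℝ => p) atTop (nhds p)).add (tendsto_const_nhds.mul (tendsto_const_nhds.sub h4) :
      Tendsto (fun t : ℝ => (1 - p) * (1 - Real.exp (-(t / lam) ^ (-alpha)))) atTop
        (nhds ((1 - p) * (1 - 1))))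
    simpa using this
  have := hnum.div hden (ne_of_gt hp.1)
  simpa [Pi.div_def] using this
end

section
/- The hazard function h(t) = f(t)/S(t) of the LF distribution tends to 0 as t → 0⁺. -/
open Filter Real

theorem lf_hazard_tendsto_zero_at_zero
    (lam alpha p : ℝ) (hlam : 0 < lam) (halpha : 0 < alpha)
    (hp : p ∈ Set.Ioo (0 : ℝ) 1) :
    Tendsto (fun t : ℝ =>
      ((alpha * (1 - p) / lam) * (t / lam) ^ (-(alpha + 1)) *
        Real.exp (-(t / lam) ^ (-alpha))) /
      (p + (1 - p) * (1 - Real.exp (-(t / lam) ^ (-alpha)))))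
      (nhdsWithin 0 (Set.Ioi 0)) (nhds 0) := by
  -- the map t ↦ t/lam tends to 0 within Ioi 0
  have hmap : Tendsto (fun t : ℝ => t / lam) (nhdsWithin 0 (Set.Ioi 0))
      (nhdsWithin 0 (Set.Ioi 0)) := by
    apply tendsto_nhdsWithin_of_tendsto_nhds_of_eventually_within
    · have : Tendsto (fun t : ℝ => t / lam) (nhds 0) (nhds (0 / lam)) :=
        (continuous_id.div_const lam).tendsto 0
      simpa using this.mono_left nhdsWithin_le_nhds
    · filter_upwards [self_mem_nhdsWithin] with t ht
      exact div_pos ht hlam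
  -- x ↦ x ^ (-alpha) tends to atTop as x → 0⁺
  have hrpow : Tendsto (fun x : ℝ => x ^ (-alpha)) (nhdsWithin 0 (Set.Ioi 0)) atTop := by
    have h1 : Tendsto (fun x : ℝ => (x⁻¹) ^ alpha) (nhdsWithin 0 (Set.Ioi 0)) atTop :=
      (tendsto_rpow_atTop halpha).comp tendsto_inv_nhdsGT_zero
    refine h1.congr' ?_
    filter_upwards [self_mem_nhdsWithin] with x hx
    rw [← Real.rpow_neg_one x, ← Real.rpow_mul (le_of_lt hx), neg_one_mul]
  have hU : Tendsto (fun t : ℝ => (t / lam) ^ (-alpha)) (nhdsWithin 0 (Set.Ioi 0)) atTop :=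
    hrpow.comp hmap
  -- exp(-(t/lam)^(-alpha)) → 0
  have hexp : Tendsto (fun t : ℝ => Real.exp (-(t / lam) ^ (-alpha)))
      (nhdsWithin 0 (Set.Ioi 0)) (nhds 0) :=
    Real.tendsto_exp_atBot.comp (tendsto_neg_atTop_atBot.comp hU)
  -- numerator (without constant) → 0
  have hnum0 : Tendsto (fun t : ℝ => (t / lam) ^ (-(alpha + 1)) *
      Real.exp (-(t / lam) ^ (-alpha))) (nhdsWithin 0 (Set.Ioi 0)) (nhds 0) := by
    have key : Tendsto (fun u : ℝ => u ^ ((alpha + 1) / alpha) * Real.exp (-u))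
        atTop (nhds 0) := by
      have := tendsto_rpow_mul_exp_neg_mul_atTop_nhds_zero ((alpha + 1) / alpha) 1
        one_pos
      simpa using this
    refine (key.comp hU).congr' ?_
    filter_upwards [hmap.eventually self_mem_nhdsWithin] with t ht
    have hx : (0:ℝ) < t / lam := ht
    have : ((t / lam) ^ (-alpha)) ^ ((alpha + 1) / alpha) = (t / lam) ^ (-(alpha + 1)) := by
      rw [← Real.rpow_mul (le_of_lt hx)]
      congr 1
      field_simp
    simp [Function.comp, this]
  -- full numerator → 0
  have hnum : Tendsto (fun t : ℝ => (alpha * (1 - p) / lam) * (t / lam) ^ (-(alpha + 1)) *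
      Real.exp (-(t / lam) ^ (-alpha))) (nhdsWithin 0 (Set.Ioi 0)) (nhds 0) := by
    have := hnum0.const_mul (alpha * (1 - p) / lam)
    simpa [mul_assoc] using this
  -- denominator → 1
  have hden : Tendsto (fun t : ℝ => p + (1 - p) * (1 - Real.exp (-(t / lam) ^ (-alpha))))
      (nhdsWithin 0 (Set.Ioi 0)) (nhds 1) := by
    have : Tendsto (fun t : ℝ => p + (1 - p) * (1 - Real.exp (-(t / lam) ^ (-alpha))))
        (nhdsWithin 0 (Set.Ioi 0)) (nhds (p + (1 - p) * (1 - 0))) :=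
      tendsto_const_nhds.add (tendsto_const_nhds.mul (tendsto_const_nhds.sub hexp))
    simpa using this
  have := hnum.div hden one_ne_zero
  rw [zero_div] at this
  exact this
end
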